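/- Let F₁ be a probability measure on [0,∞) with density f ∈ 𝓛₀, and let F₂ be any probability measure on (−∞, 0]. Then for every d > 0, the convolution satisfies (F₁ * F₂)((x, x+d]) ~ d·∫_{(−∞,0]} f(x−y) F₂(dy) as x → ∞, where F₁ * F₂ is the law of X₁ + Y with X₁ ~ F₁ and Y ~ F₂ independent. -/

import Mathlib

open MeasureTheory Filter Set

noncomputable section

/-- A probability density supported on `[0, ∞)`. -/
def IsDensity (f : ℝ → ℝ) : Prop :=
  Measurable f ∧ (∀ x < (0:ℝ), f x = 0) ∧ (∀ x : ℝ, 0 ≤ f x) ∧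
    ∫ y in Set.Ioi (0:ℝ), f y = 1

/-- The long-tailed density class `𝓛₀`. -/
def LongTailedDensity (f : ℝ → ℝ) : Prop :=
  (∀ᶠ x in atTop, 0 < f x) ∧
  ∀ t : ℝ, Tendsto (fun x => f (x + t) / f x) atTop (nhds 1)

/-- The subexponential density class `𝓢₀`. -/
def SubexpDensity (f : ℝ → ℝ) : Prop :=
  LongTailedDensity f ∧
  Tendsto (fun x => (∫ y in (0:ℝ)..x, f (x - y) * f y) / f x) atTop (nhds 2)

/-- The local mass `F((x, x+d])` of a measure, as a real number. -/
def locMass (F : Measure ℝ) (d x : ℝ) : ℝ := (F (Set.Ioc x (x + d))).toReal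

/-- `F ∈ 𝓛_{Δ_d}`. -/
def MemLdelta (F : Measure ℝ) (d : ℝ) : Prop :=
  (∀ᶠ x in atTop, 0 < locMass F d x) ∧
  ∀ t > (0:ℝ), ∀ ε > (0:ℝ), ∀ᶠ x in atTop, ∀ s : ℝ, |s| ≤ t →
    |locMass F d (x + s) / locMass F d x - 1| ≤ ε

/-- Convolution of two measures on `ℝ`: the law of the sum of two
independent random variables with laws `F` and `G`. -/
def mconv (F G : Measure ℝ) : Measure ℝ :=
  Measure.map (fun p : ℝ × ℝ => p.1 + p.2) (F.prod G)

/-- `F ∈ 𝓢_{Δ_d}`. -/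
def MemSdelta (F : Measure ℝ) (d : ℝ) : Prop :=
  MemLdelta F d ∧
  Tendsto (fun x => locMass (mconv F F) d x / locMass F d x) atTop (nhds 2)

/-- The probability measure on `[0,∞)` with density `f`. -/
def densMeasure (f : ℝ → ℝ) : Measure ℝ :=
  volume.withDensity (fun y => ENNReal.ofReal (f y))

lemma uct_ratio (f : ℝ → ℝ) (hfm : Measurable f) (hL : LongTailedDensity f)
    (d : ℝ) (hd : 0 < d) (ε : ℝ) (hε : 0 < ε) (hε1 : ε ≤ 1) :
    ∀ᶠ x in atTop, ∀ t ∈ Icc (0:ℝ) d, |f (x + t) / f x - 1| ≤ ε := by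
  by_contra hcon
  rw [Filter.not_eventually] at hcon
  obtain ⟨x0, hx0⟩ := eventually_atTop.mp hL.1
  have hseq : ∀ n : ℕ, ∃ x : ℝ, (n:ℝ) ≤ x ∧ ∃ t, t ∈ Icc (0:ℝ) d ∧ ε < |f (x+t)/f x - 1| := by
    intro n
    obtain ⟨x, hx, h⟩ := frequently_atTop.mp hcon (n:ℝ)
    push_neg at h
    obtain ⟨t, ht, h⟩ := h
    exact ⟨x, hx, t, ht, h⟩
  choose x hxge t ht hratio using hseq
  have hx : Tendsto x atTop atTop :=
    tendsto_atTop_mono hxge tendsto_natCast_atTop_atTop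
  have hxt : Tendsto (fun n => x n + t n) atTop atTop :=
    tendsto_atTop_mono (fun n => le_add_of_nonneg_right (ht n).1) hx
  set δ : ℝ := ε / 4 with hδdef
  have hδ : 0 < δ := by positivity
  set V : ℕ → ℝ → ℝ := fun n s => f (x n + s) / f (x n) with hV
  set W : ℕ → ℝ → ℝ := fun n r => f (x n + t n + r) / f (x n + t n) with hW
  have hVm : ∀ n, StronglyMeasurable (V n) := by
    intro n
    exact ((hfm.comp (measurable_const.add measurable_id)).div_const _).stronglyMeasurable
  have hWm : ∀ n, StronglyMeasurable (W n) := by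
    intro n
    exact ((hfm.comp (measurable_const.add measurable_id)).div_const _).stronglyMeasurable
  have hVp : ∀ s : ℝ, Tendsto (fun n => V n s) atTop (nhds 1) := fun s => (hL.2 s).comp hx
  have hWp : ∀ r : ℝ, Tendsto (fun n => W n r) atTop (nhds 1) := fun r => (hL.2 r).comp hxt
  obtain ⟨t₁, ht₁sub, ht₁m, ht₁μ, hunifV⟩ :=
    tendstoUniformlyOn_of_ae_tendsto (μ := volume) (s := Icc (0:ℝ) (2*d)) hVm
      stronglyMeasurable_const measurableSet_Icc (by simp; exact ENNReal.mul_ne_top (by simp) ENNReal.ofReal_ne_top)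
      (Eventually.of_forall fun s _ => hVp s) (show (0:ℝ) < d/4 by positivity)
  obtain ⟨t₂, ht₂sub, ht₂m, ht₂μ, hunifW⟩ :=
    tendstoUniformlyOn_of_ae_tendsto (μ := volume) (s := Icc (0:ℝ) d) hWm
      stronglyMeasurable_const measurableSet_Icc (by simp)
      (Eventually.of_forall fun r _ => hWp r) (show (0:ℝ) < d/4 by positivity)
  set E : Set ℝ := Icc (0:ℝ) (2*d) \ t₁ with hE
  set F : Set ℝ := Icc (0:ℝ) d \ t₂ with hF
  -- pick n large
  have hev : ∀ᶠ n in atTop, (∀ s ∈ E, dist (1:ℝ) (V n s) < δ) ∧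
      (∀ r ∈ F, dist (1:ℝ) (W n r) < δ) ∧ x0 ≤ x n := by
    refine (((Metric.tendstoUniformlyOn_iff.mp hunifV) δ hδ).and
      (((Metric.tendstoUniformlyOn_iff.mp hunifW) δ hδ).and ?_)).mono
      (fun n h => ⟨h.1, h.2.1, h.2.2⟩)
    exact hx.eventually_ge_atTop x0
  obtain ⟨n, hVn, hWn, hxn⟩ := hev.exists
  -- the translated set
  set G : Set ℝ := (fun s => s - t n) ⁻¹' F with hG
  have hGsub : G ⊆ Icc (0:ℝ) (2*d) := by
    intro s hs
    have h1 : s - t n ∈ Icc (0:ℝ) d := (mem_preimage.mp hs).1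
    have h2 := (ht n).1
    have h3 := (ht n).2
    rw [mem_Icc] at h1 ⊢
    constructor <;> linarith [h1.1, h1.2]
  have hGvol : volume G = volume F := by
    have : G = (fun s => s + (-(t n))) ⁻¹' F := by
      ext s; simp [G, sub_eq_add_neg]
    rw [this, measure_preimage_add_right]
  have hne : (E ∩ G).Nonempty := by
    by_contra hemp
    rw [not_nonempty_iff_eq_empty] at hemp
    have hGt1 : G ⊆ t₁ := by
      intro s hs
      by_contra hst
      have hsE : s ∈ E := ⟨hGsub hs, hst⟩
      have : s ∈ E ∩ G := ⟨hsE, hs⟩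
      rw [hemp] at this
      exact this
    have h1 : volume G ≤ ENNReal.ofReal (d/4) := le_trans (measure_mono hGt1) ht₁μ
    have h3 : volume (Icc (0:ℝ) d) ≤ volume F + volume t₂ := by
      refine le_trans (measure_mono ?_) (measure_union_le _ _)
      intro r hr
      by_cases hrt : r ∈ t₂
      · exact Or.inr hrt
      · exact Or.inl ⟨hr, hrt⟩
    rw [Real.volume_Icc] at h3
    have h4 : ENNReal.ofReal (d - 0) ≤ ENNReal.ofReal (d/4) + ENNReal.ofReal (d/4) := by
      refine le_trans h3 (add_le_add (hGvol ▸ h1) ht₂μ)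
    rw [← ENNReal.ofReal_add (by positivity) (by positivity)] at h4
    have := (ENNReal.ofReal_le_ofReal_iff (by positivity)).mp h4
    linarith
  obtain ⟨s, hsE, hsG⟩ := hne
  have hfx : 0 < f (x n) := hx0 _ hxn
  have hfxt : 0 < f (x n + t n) := hx0 _ (by linarith [(ht n).1])
  have hVb : |V n s - 1| < δ := by
    rw [abs_sub_comm]; simpa [Real.dist_eq] using hVn s hsE
  have hWb : |W n (s - t n) - 1| < δ := by
    rw [abs_sub_comm]; simpa [Real.dist_eq] using hWn _ hsG
  obtain ⟨hVlo, hVhi⟩ := abs_lt.mp hVb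
  obtain ⟨hWlo, hWhi⟩ := abs_lt.mp hWb
  have hδ4 : δ ≤ 1/4 := by rw [hδdef]; linarith
  have hWpos : 0 < W n (s - t n) := by linarith
  have key : f (x n + t n) / f (x n) = V n s / W n (s - t n) := by
    have hco : x n + t n + (s - t n) = x n + s := by ring
    show f (x n + t n) / f (x n)
      = (f (x n + s) / f (x n)) / (f (x n + t n + (s - t n)) / f (x n + t n))
    rw [hco]
    have hfxs : f (x n + s) ≠ 0 := by
      intro h0
      have : W n (s - t n) = 0 := by
        show f (x n + t n + (s - t n)) / f (x n + t n) = 0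
        rw [hco, h0, zero_div]
      linarith [this ▸ hWpos]
    field_simp
  refine absurd (hratio n) (not_lt.mpr ?_)
  rw [key]
  have hq : V n s / W n (s - t n) - 1 = (V n s - W n (s - t n)) / W n (s - t n) := by
    field_simp
  rw [hq, abs_div, abs_of_pos hWpos, div_le_iff₀ hWpos]
  have habs : |V n s - W n (s - t n)| ≤ |V n s - 1| + |W n (s - t n) - 1| := by
    have := abs_sub (V n s - 1) (W n (s - t n) - 1)
    calc |V n s - W n (s - t n)| = |(V n s - 1) - (W n (s - t n) - 1)| := by ring_nf
      _ ≤ |V n s - 1| + |W n (s - t n) - 1| := abs_sub _ _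
  nlinarith [abs_nonneg (V n s - 1), abs_nonneg (W n (s - t n) - 1)]

lemma densMeasure_univ (f : ℝ → ℝ) (hf : IsDensity f) : densMeasure f Set.univ = 1 := by
  rw [densMeasure, withDensity_apply _ MeasurableSet.univ, Measure.restrict_univ]
  rw [← lintegral_add_compl (fun y => ENNReal.ofReal (f y)) (measurableSet_Ioi (a := (0:ℝ)))]
  have part2 : ∫⁻ y in (Ioi (0:ℝ))ᶜ, ENNReal.ofReal (f y) = 0 := by
    rw [compl_Ioi]
    rw [show volume.restrict (Iic (0:ℝ)) = volume.restrict (Iio 0) from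
      Measure.restrict_congr_set Iio_ae_eq_Iic.symm]
    rw [setLIntegral_congr_fun measurableSet_Iio
      (fun y (hy : y < 0) => by rw [hf.2.1 y hy])]
    simp
  have part1 : ∫⁻ y in Ioi (0:ℝ), ENNReal.ofReal (f y) = 1 := by
    have hi := hf.2.2.2
    rw [integral_eq_lintegral_of_nonneg_ae (ae_of_all _ (fun y => hf.2.2.1 y))
      (hf.1.aestronglyMeasurable)] at hi
    have hne : (∫⁻ y in Ioi (0:ℝ), ENNReal.ofReal (f y)) ≠ ⊤ := by
      intro h; rw [h] at hi; simp at hi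
    rw [← ENNReal.ofReal_one, ← hi, ENNReal.ofReal_toReal hne]
  rw [part1, part2, add_zero]

lemma mconv_apply_Ioc (f : ℝ → ℝ) (hf : IsDensity f) (F₂ : Measure ℝ)
    [IsProbabilityMeasure F₂] (x d : ℝ) :
    mconv (densMeasure f) F₂ (Ioc x (x+d))
      = ∫⁻ y, (densMeasure f) (Ioc (x - y) (x + d - y)) ∂F₂ := by
  haveI : IsProbabilityMeasure (densMeasure f) := ⟨densMeasure_univ f hf⟩
  rw [mconv, ← Measure.prod_swap, Measure.map_map measurable_add measurable_swap]
  rw [show ((fun p : ℝ×ℝ => p.1 + p.2) ∘ Prod.swap) = fun p : ℝ×ℝ => p.2 + p.1 from rfl]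
  rw [Measure.map_apply (show Measurable fun p : ℝ×ℝ => p.2 + p.1 from measurable_snd.add measurable_fst) measurableSet_Ioc]
  rw [Measure.prod_apply ((show Measurable fun p : ℝ×ℝ => p.2 + p.1 from measurable_snd.add measurable_fst) measurableSet_Ioc)]
  refine lintegral_congr (fun y => ?_)
  congr 1
  ext u
  simp only [mem_preimage, mem_Ioc, mem_setOf_eq]
  constructor <;> intro h <;> exact ⟨by linarith [h.1], by linarith [h.2]⟩

theorem conv_local_mass_asymptotic_of_long_tailed_density (f : ℝ → ℝ)
    (hf : IsDensity f) (hL : LongTailedDensity f)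
    (F₂ : Measure ℝ) (hF₂ : IsProbabilityMeasure F₂)
    (hsupp : F₂ (Set.Ioi 0) = 0) :
    ∀ d > (0:ℝ),
      Tendsto (fun x =>
          locMass (mconv (densMeasure f) F₂) d x /
            (d * ∫ y in Set.Iic (0:ℝ), f (x - y) ∂F₂)) atTop (nhds 1) := by
  obtain ⟨hfm, hfneg, hfnn, hfint⟩ := hf
  haveI : IsProbabilityMeasure (densMeasure f) := ⟨densMeasure_univ f ⟨hfm, hfneg, hfnn, hfint⟩⟩
  haveI : IsProbabilityMeasure (mconv (densMeasure f) F₂) := by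
    rw [mconv]; exact Measure.isProbabilityMeasure_map measurable_add.aemeasurable
  have hae : ∀ᵐ y ∂F₂, y ≤ 0 := by
    rw [ae_iff]
    convert hsupp using 2
    ext y; simp [not_le]
  intro d hd
  rw [Metric.tendsto_nhds]
  intro ε0 hε0
  set ε := min (ε0/2) (1/2) with hεdef
  have hε : 0 < ε := lt_min (by linarith) one_half_pos
  have hεh2 : ε ≤ 1/2 := min_le_right _ _
  have hε1 : ε ≤ 1 := by linarith
  have hεhalf : ε < ε0 := lt_of_le_of_lt (min_le_left _ _) (by linarith)
  obtain ⟨X, hX⟩ := eventually_atTop.mp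
    ((hL.1.and (uct_ratio f hfm hL d hd ε hε hε1)))
  rw [eventually_atTop]
  refine ⟨X, fun x hx => ?_⟩
  -- pointwise bounds on the density measure of small intervals
  have hz : ∀ z, X ≤ z →
      ENNReal.ofReal ((1-ε) * f z) * ENNReal.ofReal d ≤ densMeasure f (Ioc z (z+d)) ∧
      densMeasure f (Ioc z (z+d)) ≤ ENNReal.ofReal ((1+ε) * f z) * ENNReal.ofReal d := by
    intro z hzX
    obtain ⟨hfz, hrat⟩ := hX z hzX
    have hb : ∀ u ∈ Ioc z (z+d), (1-ε) * f z ≤ f u ∧ f u ≤ (1+ε) * f z := by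
      intro u hu
      have ht' : u - z ∈ Icc (0:ℝ) d := ⟨by linarith [hu.1], by linarith [hu.2]⟩
      have habs := abs_le.mp (hrat (u - z) ht')
      rw [show z + (u - z) = u from by ring] at habs
      constructor
      · exact (le_div_iff₀ hfz).mp (by linarith [habs.1])
      · exact (div_le_iff₀ hfz).mp (by linarith [habs.2])
    rw [densMeasure, withDensity_apply _ measurableSet_Ioc]
    constructor
    · calc ENNReal.ofReal ((1-ε) * f z) * ENNReal.ofReal d
          = ∫⁻ _ in Ioc z (z+d), ENNReal.ofReal ((1-ε) * f z) := by
            rw [setLIntegral_const, Real.volume_Ioc]; congr 1; ring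
        _ ≤ ∫⁻ u in Ioc z (z+d), ENNReal.ofReal (f u) :=
            setLIntegral_mono hfm.ennreal_ofReal
              (fun u hu => ENNReal.ofReal_le_ofReal (hb u hu).1)
    · calc ∫⁻ u in Ioc z (z+d), ENNReal.ofReal (f u)
          ≤ ∫⁻ _ in Ioc z (z+d), ENNReal.ofReal ((1+ε) * f z) :=
            setLIntegral_mono measurable_const
              (fun u hu => ENNReal.ofReal_le_ofReal (hb u hu).2)
        _ = ENNReal.ofReal ((1+ε) * f z) * ENNReal.ofReal d := by
            rw [setLIntegral_const, Real.volume_Ioc]; congr 1; ring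
  set J := ∫⁻ y, ENNReal.ofReal (f (x - y)) ∂F₂ with hJdef
  have hJm : Measurable fun y : ℝ => ENNReal.ofReal (f (x - y)) :=
    (hfm.comp (measurable_const.sub measurable_id)).ennreal_ofReal
  have hLrw : mconv (densMeasure f) F₂ (Ioc x (x+d))
      = ∫⁻ y, densMeasure f (Ioc (x-y) (x+d-y)) ∂F₂ :=
    mconv_apply_Ioc f ⟨hfm, hfneg, hfnn, hfint⟩ F₂ x d
  have hub : mconv (densMeasure f) F₂ (Ioc x (x+d))
      ≤ ENNReal.ofReal (1+ε) * ENNReal.ofReal d * J := by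
    rw [hLrw, ← lintegral_const_mul _ hJm]
    refine lintegral_mono_ae (hae.mono (fun y hy => ?_))
    rw [show x + d - y = (x - y) + d from by ring]
    refine le_trans (hz (x - y) (by linarith)).2 (le_of_eq ?_)
    rw [ENNReal.ofReal_mul (by linarith : (0:ℝ) ≤ 1 + ε)]
    ring
  have hlb : ENNReal.ofReal (1-ε) * ENNReal.ofReal d * J
      ≤ mconv (densMeasure f) F₂ (Ioc x (x+d)) := by
    rw [hLrw, ← lintegral_const_mul _ hJm]
    refine lintegral_mono_ae (hae.mono (fun y hy => ?_))
    rw [show x + d - y = (x - y) + d from by ring]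
    refine le_trans (le_of_eq ?_) (hz (x - y) (by linarith)).1
    rw [ENNReal.ofReal_mul (by linarith : (0:ℝ) ≤ 1 - ε)]
    ring
  have hL1 : mconv (densMeasure f) F₂ (Ioc x (x+d)) ≤ 1 := prob_le_one
  have hLfin : mconv (densMeasure f) F₂ (Ioc x (x+d)) ≠ ⊤ := measure_ne_top _ _
  have hJfin : J ≠ ⊤ := by
    intro hJt
    have h0 : ENNReal.ofReal (1-ε) * ENNReal.ofReal d ≠ 0 :=
      mul_ne_zero (by simp only [ne_eq, ENNReal.ofReal_eq_zero, not_le]; linarith)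
        (by simp only [ne_eq, ENNReal.ofReal_eq_zero, not_le]; linarith)
    rw [hJt, ENNReal.mul_top h0] at hlb
    exact absurd (le_trans hlb hL1) (by simp)
  have hJ0 : J ≠ 0 := by
    intro h0
    have hze := (lintegral_eq_zero_iff hJm).mp h0
    obtain ⟨y, hy0, hyle⟩ := (hze.and hae).exists
    have hfy : 0 < f (x - y) := (hX (x - y) (by linarith)).1
    simp only [Pi.zero_apply, ENNReal.ofReal_eq_zero] at hy0
    linarith
  have hJR : 0 < J.toReal := ENNReal.toReal_pos hJ0 hJfin
  have hint : ∫ y in Iic (0:ℝ), f (x - y) ∂F₂ = J.toReal := by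
    have hres : F₂.restrict (Iic 0) = F₂ := by
      have h1 : (Iic (0:ℝ)) =ᵐ[F₂] univ := by rw [ae_eq_univ, compl_Iic]; exact hsupp
      rw [Measure.restrict_congr_set h1, Measure.restrict_univ]
    have hm2 : Measurable fun y : ℝ => f (x - y) := hfm.comp (measurable_const.sub measurable_id)
    have heq := integral_eq_lintegral_of_nonneg_ae (μ := F₂) (f := fun y => f (x - y))
      (ae_of_all _ fun y => hfnn _) hm2.aestronglyMeasurable
    rw [hres]
    exact heq
  set a := locMass (mconv (densMeasure f) F₂) d x with hadef
  have haL : a = (mconv (densMeasure f) F₂ (Ioc x (x+d))).toReal := rfl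
  have hubR : a ≤ (1+ε) * (d * J.toReal) := by
    have hfin : ENNReal.ofReal (1+ε) * ENNReal.ofReal d * J ≠ ⊤ :=
      ENNReal.mul_ne_top (ENNReal.mul_ne_top ENNReal.ofReal_ne_top ENNReal.ofReal_ne_top) hJfin
    have := ENNReal.toReal_mono hfin hub
    rw [haL]
    rw [ENNReal.toReal_mul, ENNReal.toReal_mul, ENNReal.toReal_ofReal (by linarith),
      ENNReal.toReal_ofReal hd.le] at this
    linarith [this, mul_assoc (1+ε) d J.toReal]
  have hlbR : (1-ε) * (d * J.toReal) ≤ a := by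
    have := ENNReal.toReal_mono hLfin hlb
    rw [haL]
    rw [ENNReal.toReal_mul, ENNReal.toReal_mul, ENNReal.toReal_ofReal (by linarith),
      ENNReal.toReal_ofReal hd.le] at this
    linarith [this, mul_assoc (1-ε) d J.toReal]
  rw [Real.dist_eq, hint]
  have hdj : 0 < d * J.toReal := by positivity
  have habs : |a / (d * J.toReal) - 1| ≤ ε := by
    rw [abs_le]
    constructor
    · have h1 : 1 - ε ≤ a / (d * J.toReal) := (le_div_iff₀ hdj).mpr (by linarith)
      linarith
    · have h1 : a / (d * J.toReal) ≤ 1 + ε := (div_le_iff₀ hdj).mpr (by linarith)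
      linarith
  exact lt_of_le_of_lt habs hεhalf
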